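/- arXiv:1403.1954 — 2 statements merged into one kernel-verified Lean document; each statement's English description precedes it below -/
import Mathlib

section
/- Let ν ≥ 0 and let j_{ν,1} denote the smallest positive zero of J_ν. Then the function g(t) = J_{ν+1}(t) / J_ν(t) is well defined and strictly increasing on the open interval (0, j_{ν,1}); in fact g'(t) > 0 there. -/
open MeasureTheory Set Filter

/-- Bessel function of the first kind of order `ν`, defined by its power series
(real exponents; intended for `x > 0`). -/
noncomputable def besselJ (ν x : ℝ) : ℝ :=
  ∑' k : ℕ, ((-1 : ℝ) ^ k / (Nat.factorial k * Real.Gamma (ν + k + 1))) *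
    (x / 2) ^ (2 * (k : ℝ) + ν)

namespace BesselAux

/-- Coefficient of the modified series. -/
noncomputable def a (ν : ℝ) (k : ℕ) : ℝ :=
  (-1 : ℝ) ^ k / (Nat.factorial k * Real.Gamma (ν + k + 1))

/-- The entire function `f ν y = ∑ a ν k y^k`, so that `J_ν(t) = (t/2)^ν f ν ((t/2)^2)`. -/
noncomputable def f (ν : ℝ) (y : ℝ) : ℝ := ∑' k : ℕ, a ν k * y ^ k

lemma Gamma_pos (ν : ℝ) (hν : 0 ≤ ν) (k : ℕ) : 0 < Real.Gamma (ν + k + 1) := by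
  apply Real.Gamma_pos_of_pos; positivity

lemma fact_le_Gamma (ν : ℝ) (hν : 0 ≤ ν) (k : ℕ) :
    (Nat.factorial k : ℝ) * Real.Gamma (ν + 1) ≤ Real.Gamma (ν + k + 1) := by
  induction k with
  | zero => simp
  | succ n ih =>
      have h1 : Real.Gamma (ν + (n + 1 : ℕ) + 1) = (ν + n + 1) * Real.Gamma (ν + n + 1) := by
        have : (ν + (n + 1 : ℕ) + 1) = (ν + n + 1) + 1 := by push_cast; ring
        rw [this, Real.Gamma_add_one (by positivity)]
      rw [h1]
      have h2 : ((n + 1 : ℕ) : ℝ) * ((Nat.factorial n : ℝ) * Real.Gamma (ν + 1)) ≤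
          (ν + n + 1) * Real.Gamma (ν + n + 1) := by
        apply mul_le_mul _ ih (by positivity) (by positivity)
        push_cast; linarith
      calc ((Nat.factorial (n+1) : ℝ)) * Real.Gamma (ν + 1)
          = ((n + 1 : ℕ) : ℝ) * ((Nat.factorial n : ℝ) * Real.Gamma (ν + 1)) := by
            push_cast [Nat.factorial_succ]; ring
        _ ≤ _ := h2

lemma abs_a_le (ν : ℝ) (hν : 0 ≤ ν) (k : ℕ) :
    |a ν k| ≤ (1 / Real.Gamma (ν + 1)) / Nat.factorial k := by
  have hΓ := Gamma_pos ν hν k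
  have hΓ1 : 0 < Real.Gamma (ν + 1) := Real.Gamma_pos_of_pos (by linarith)
  have hfact : (0 : ℝ) < Nat.factorial k := by positivity
  have : |a ν k| = 1 / ((Nat.factorial k : ℝ) * Real.Gamma (ν + k + 1)) := by
    rw [a, abs_div, abs_pow, abs_neg, abs_one, one_pow, abs_of_pos (by positivity)]
  rw [this]
  have h1 : (Nat.factorial k : ℝ) * Real.Gamma (ν+1) ≤ Real.Gamma (ν + k + 1) := fact_le_Gamma ν hν k
  rw [div_le_div_iff₀ (by positivity) hfact]
  have h2 : (1:ℝ) * (Nat.factorial k) = (Nat.factorial k : ℝ) := by ring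
  rw [h2, div_mul_eq_mul_div, le_div_iff₀ hΓ1]
  have hfact1 : (1:ℝ) ≤ Nat.factorial k := by exact_mod_cast Nat.one_le_iff_ne_zero.mpr (Nat.factorial_ne_zero k)
  nlinarith [hΓ1.le, hΓ.le]

lemma summable_aux (C : ℝ) (hC : 0 ≤ C) (R : ℝ) :
    Summable (fun k : ℕ => C * |R| ^ k / Nat.factorial k) := by
  simpa [mul_div_assoc] using (Real.summable_pow_div_factorial |R|).mul_left C

lemma summable_f (ν : ℝ) (hν : 0 ≤ ν) (y : ℝ) : Summable (fun k : ℕ => a ν k * y ^ k) := by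
  have hΓ1 : 0 < Real.Gamma (ν + 1) := Real.Gamma_pos_of_pos (by linarith)
  have hsum := summable_aux (1 / Real.Gamma (ν+1)) (by positivity) y
  apply Summable.of_norm_bounded hsum
  intro k
  have h1 := abs_a_le ν hν k
  have h2 : ‖a ν k * y ^ k‖ = |a ν k| * |y| ^ k := by
    rw [Real.norm_eq_abs, abs_mul, abs_pow]
  rw [h2]
  calc |a ν k| * |y| ^ k ≤ ((1 / Real.Gamma (ν+1)) / Nat.factorial k) * |y| ^ k :=
        mul_le_mul_of_nonneg_right h1 (by positivity)
    _ = 1 / Real.Gamma (ν+1) * |y| ^ k / Nat.factorial k := by ring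


lemma a_succ (ν : ℝ) (hν : 0 ≤ ν) (k : ℕ) :
    a ν (k+1) * ((k:ℝ)+1) = -(a (ν+1) k) := by
  unfold a
  have h1 : ν + ((k+1:ℕ):ℝ) + 1 = (ν + 1) + (k:ℝ) + 1 := by push_cast; ring
  rw [h1]
  have hΓ : Real.Gamma (ν + 1 + k + 1) ≠ 0 := ne_of_gt (Gamma_pos (ν+1) (by linarith) k)
  have hf : ((k+1).factorial : ℝ) ≠ 0 := by positivity
  have hf' : ((k).factorial : ℝ) ≠ 0 := by positivity
  rw [Nat.factorial_succ, pow_succ]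
  push_cast
  field_simp

lemma a_rec (ν : ℝ) (hν : 0 ≤ ν) (k : ℕ) :
    a ν (k+1) - (ν+1) * a (ν+1) (k+1) = -(a (ν+2) k) := by
  unfold a
  have h1 : ν + ((k+1:ℕ):ℝ) + 1 = (ν + (k:ℝ) + 1) + 1 := by push_cast; ring
  have h2 : ν + 1 + ((k+1:ℕ):ℝ) + 1 = ((ν + (k:ℝ) + 1) + 1) + 1 := by push_cast; ring
  have h3 : ν + 2 + (k:ℝ) + 1 = ((ν + (k:ℝ) + 1) + 1) + 1 := by ring
  have hX : (0:ℝ) < ν + (k:ℝ) + 1 := by positivity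
  rw [h1, h2, h3, Real.Gamma_add_one (by positivity : ν + (k:ℝ) + 1 + 1 ≠ 0)]
  have hΓ : Real.Gamma (ν + k + 1 + 1) ≠ 0 := by
    have : (0:ℝ) < ν + (k:ℝ) + 1 + 1 := by positivity
    exact ne_of_gt (Real.Gamma_pos_of_pos this)
  have hf : ((k+1).factorial : ℝ) ≠ 0 := by positivity
  have hf' : ((k).factorial : ℝ) ≠ 0 := by positivity
  rw [Nat.factorial_succ, pow_succ]
  push_cast
  field_simp
  ring

lemma hasDerivAt_f (ν : ℝ) (hν : 0 ≤ ν) (y : ℝ) :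
    HasDerivAt (f ν) (-(f (ν+1) y)) y := by
  set R : ℝ := |y| + 1 with hRdef
  have hR1 : (1:ℝ) ≤ R := by rw [hRdef]; linarith [abs_nonneg y]
  have hR0 : (0:ℝ) < R := by linarith
  have hΓ1 : 0 < Real.Gamma (ν + 1) := Real.Gamma_pos_of_pos (by linarith)
  have hu : Summable (fun k : ℕ => (1 / Real.Gamma (ν+1)) * (2*R) ^ k / Nat.factorial k) := by
    have := summable_aux (1 / Real.Gamma (ν+1)) (by positivity) (2*R)
    rwa [abs_of_pos (by linarith)] at this
  have hymem : y ∈ Metric.ball (0:ℝ) R := by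
    rw [mem_ball_zero_iff, Real.norm_eq_abs, hRdef]; linarith
  have hbound : ∀ (k : ℕ) (z : ℝ), z ∈ Metric.ball (0:ℝ) R →
      ‖a ν k * ((k:ℝ) * z ^ (k-1))‖ ≤ (1 / Real.Gamma (ν+1)) * (2*R) ^ k / Nat.factorial k := by
    intro k z hz
    have hzR : |z| ≤ R := by
      have := mem_ball_zero_iff.mp hz
      rw [Real.norm_eq_abs] at this; linarith
    have h1 : ‖a ν k * ((k:ℝ) * z ^ (k-1))‖ = |a ν k| * ((k:ℝ) * |z| ^ (k-1)) := by
      rw [Real.norm_eq_abs, abs_mul, abs_mul, abs_pow, Nat.abs_cast]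
    rw [h1]
    have hk2 : (k:ℝ) ≤ 2 ^ k := by exact_mod_cast (Nat.lt_two_pow_self (n := k)).le
    have hzk : |z| ^ (k-1) ≤ R ^ k := by
      calc |z| ^ (k-1) ≤ R ^ (k-1) := pow_le_pow_left₀ (abs_nonneg z) hzR _
        _ ≤ R ^ k := pow_le_pow_right₀ hR1 (Nat.sub_le k 1)
    have h2 : (k:ℝ) * |z| ^ (k-1) ≤ 2 ^ k * R ^ k :=
      mul_le_mul hk2 hzk (by positivity) (by positivity)
    calc |a ν k| * ((k:ℝ) * |z| ^ (k-1))
        ≤ ((1 / Real.Gamma (ν + 1)) / Nat.factorial k) * (2 ^ k * R ^ k) :=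
          mul_le_mul (abs_a_le ν hν k) h2 (by positivity) (by positivity)
      _ = 1 / Real.Gamma (ν+1) * (2*R) ^ k / Nat.factorial k := by rw [mul_pow]; ring
  have key : HasDerivAt (f ν) (∑' k : ℕ, a ν k * ((k:ℝ) * y ^ (k-1))) y := by
    refine hasDerivAt_tsum_of_isPreconnected hu Metric.isOpen_ball
      (convex_ball (0:ℝ) R).isPreconnected
      (g := fun k z => a ν k * z ^ k) (g' := fun k z => a ν k * ((k:ℝ) * z ^ (k-1)))
      (y₀ := 0) ?_ ?_ ?_ ?_ hymem
    · intro k z _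
      exact (hasDerivAt_pow k z).const_mul (a ν k)
    · intro k z hz; exact hbound k z hz
    · rw [mem_ball_zero_iff]; simpa using hR0
    · exact summable_f ν hν 0
  have hsum' : Summable (fun k : ℕ => a ν k * ((k:ℝ) * y ^ (k-1))) := by
    apply Summable.of_norm_bounded hu
    intro k; exact hbound k y hymem
  have heq : (∑' k : ℕ, a ν k * ((k:ℝ) * y ^ (k-1))) = -(f (ν+1) y) := by
    rw [Summable.tsum_eq_zero_add hsum']
    simp only [Nat.cast_zero, zero_mul, mul_zero, zero_add]
    have : ∀ k : ℕ, a ν (k+1) * (((k+1:ℕ):ℝ) * y ^ (k+1-1)) = -(a (ν+1) k * y ^ k) := by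
      intro k
      have := a_succ ν hν k
      have h1 : ((k+1:ℕ):ℝ) = (k:ℝ)+1 := by push_cast; ring
      rw [h1, Nat.add_sub_cancel]
      calc a ν (k+1) * (((k:ℝ)+1) * y ^ k) = (a ν (k+1) * ((k:ℝ)+1)) * y ^ k := by ring
        _ = -(a (ν+1) k) * y ^ k := by rw [this]
        _ = -(a (ν+1) k * y ^ k) := by ring
    rw [tsum_congr this, tsum_neg]
    rfl
  rw [heq] at key; exact key

lemma f_rec (ν : ℝ) (hν : 0 ≤ ν) (y : ℝ) :
    f ν y + y * f (ν+2) y = (ν+1) * f (ν+1) y := by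
  have hs1 := summable_f ν hν y
  have hs2 := summable_f (ν+1) (by linarith) y
  have hs3 := summable_f (ν+2) (by linarith) y
  have key : f ν y - (ν+1) * f (ν+1) y = -(y * f (ν+2) y) := by
    have h1 : (ν+1) * f (ν+1) y = ∑' k : ℕ, (ν+1) * (a (ν+1) k * y ^ k) := by
      rw [f, tsum_mul_left]
    have h2 : f ν y - (ν+1) * f (ν+1) y
        = ∑' k : ℕ, (a ν k - (ν+1) * a (ν+1) k) * y ^ k := by
      rw [f, h1, ← Summable.tsum_sub hs1 (hs2.mul_left _)]
      apply tsum_congr; intro k; ring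
    rw [h2]
    have hsum : Summable (fun k : ℕ => (a ν k - (ν+1) * a (ν+1) k) * y ^ k) := by
      have := hs1.sub (hs2.mul_left (ν+1))
      apply this.congr
      intro k; ring
    rw [Summable.tsum_eq_zero_add hsum]
    have hzero : (a ν 0 - (ν+1) * a (ν+1) 0) * y ^ 0 = 0 := by
      have hΓ2 : Real.Gamma (ν + 2) = (ν+1) * Real.Gamma (ν+1) := by
        have : ν + 2 = (ν + 1) + 1 := by ring
        rw [this, Real.Gamma_add_one (by positivity)]
      have hΓ1 : Real.Gamma (ν + 1) ≠ 0 := ne_of_gt (Real.Gamma_pos_of_pos (by linarith))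
      have ha0 : a ν 0 = 1 / Real.Gamma (ν+1) := by
        simp only [a, pow_zero, Nat.factorial_zero, Nat.cast_zero, Nat.cast_one, add_zero, one_mul]
      have ha0' : a (ν+1) 0 = 1 / ((ν+1) * Real.Gamma (ν+1)) := by
        simp only [a, pow_zero, Nat.factorial_zero, Nat.cast_zero, Nat.cast_one]
        rw [show ν + 1 + (0:ℝ) + 1 = ν + 2 by ring, hΓ2]
        simp
      rw [ha0, ha0', pow_zero]
      field_simp
      ring
    rw [hzero, zero_add]
    have hterm : ∀ k : ℕ, (a ν (k+1) - (ν+1) * a (ν+1) (k+1)) * y ^ (k+1)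
        = -(y * (a (ν+2) k * y ^ k)) := by
      intro k
      rw [a_rec ν hν k, pow_succ]
      ring
    rw [tsum_congr hterm, tsum_neg, tsum_mul_left]
    rfl
  linarith [key]


lemma f_zero (ν : ℝ) : f ν 0 = 1 / Real.Gamma (ν+1) := by
  rw [f, tsum_eq_single 0 (by intro k hk; simp [zero_pow hk])]
  simp only [a, pow_zero, Nat.factorial_zero, Nat.cast_zero, Nat.cast_one, add_zero,
    one_mul, mul_one]

lemma continuous_f (ν : ℝ) (hν : 0 ≤ ν) : Continuous (f ν) := by
  have h : Differentiable ℝ (f ν) := fun y => (hasDerivAt_f ν hν y).differentiableAt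
  exact h.continuous

lemma besselJ_eq (ν : ℝ) (t : ℝ) (ht : 0 < t) :
    besselJ ν t = (t/2) ^ ν * f ν ((t/2)^2) := by
  rw [besselJ, f, ← tsum_mul_left]
  apply tsum_congr
  intro k
  have h2 : (0:ℝ) < t/2 := by linarith
  have key : (t/2 : ℝ) ^ (2*(k:ℝ) + ν) = ((t/2)^2)^k * (t/2)^ν := by
    rw [Real.rpow_add h2]
    congr 1
    rw [show (2*(k:ℝ)) = ((2*k : ℕ) : ℝ) by push_cast; ring, Real.rpow_natCast, pow_mul]
  rw [key]
  simp only [a]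
  ring

lemma hasDerivAt_besselJ (ν : ℝ) (hν : 0 ≤ ν) (t : ℝ) (ht : 0 < t) :
    HasDerivAt (besselJ ν) (ν / t * besselJ ν t - besselJ (ν+1) t) t := by
  have h2 : (0:ℝ) < t/2 := by linarith
  have hd1 : HasDerivAt (fun s : ℝ => (s/2) ^ ν) (ν * (t/2)^(ν-1) * (1/2)) t := by
    have h := Real.hasDerivAt_rpow_const (x := t/2) (p := ν) (Or.inl (ne_of_gt h2))
    have hdiv : HasDerivAt (fun s : ℝ => s/2) (1/2) t := (hasDerivAt_id t).div_const 2
    have := h.comp t hdiv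
    simpa [Function.comp_def] using this
  have hinner : HasDerivAt (fun s : ℝ => (s/2)^2) (2*(t/2)^1*(1/2)) t := by
    have hdiv : HasDerivAt (fun s : ℝ => s/2) (1/2) t := (hasDerivAt_id t).div_const 2
    simpa using hdiv.fun_pow 2
  have hd2 : HasDerivAt (fun s : ℝ => f ν ((s/2)^2))
      (-(f (ν+1) ((t/2)^2)) * (2*(t/2)^1*(1/2))) t :=
    (hasDerivAt_f ν hν _).comp t hinner
  have hB := hd1.mul hd2
  have hev : (fun s => (s/2) ^ ν * f ν ((s/2)^2)) =ᶠ[nhds t] besselJ ν := by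
    filter_upwards [eventually_gt_nhds ht] with s hs
    exact (besselJ_eq ν s hs).symm
  have hB' := hB.congr_of_eventuallyEq hev.symm
  have hval : ν * (t/2)^(ν-1) * (1/2) * f ν ((t/2)^2)
      + (t/2)^ν * (-(f (ν+1) ((t/2)^2)) * (2*(t/2)^1*(1/2)))
      = ν / t * besselJ ν t - besselJ (ν+1) t := by
    rw [besselJ_eq ν t ht, besselJ_eq (ν+1) t ht]
    have e1 : (t/2:ℝ) ^ (ν-1) = (t/2)^ν / (t/2) := by
      rw [Real.rpow_sub h2, Real.rpow_one]
    have e2 : (t/2:ℝ) ^ (ν+1) = (t/2)^ν * (t/2) := by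
      rw [Real.rpow_add_one (ne_of_gt h2)]
    rw [e1, e2]
    have ht' : t ≠ 0 := ne_of_gt ht
    field_simp
    ring
  rwa [hval] at hB'

lemma besselJ_rec (ν : ℝ) (hν : 0 ≤ ν) (t : ℝ) (ht : 0 < t) :
    besselJ ν t + besselJ (ν+2) t = (2*(ν+1)/t) * besselJ (ν+1) t := by
  have h2 : (0:ℝ) < t/2 := by linarith
  rw [besselJ_eq ν t ht, besselJ_eq (ν+1) t ht, besselJ_eq (ν+2) t ht]
  have hrec := f_rec ν hν ((t/2)^2)
  have e1 : (t/2:ℝ) ^ (ν+1) = (t/2)^ν * (t/2) := Real.rpow_add_one (ne_of_gt h2) ν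
  have e2 : (t/2:ℝ) ^ (ν+2) = (t/2)^ν * (t/2)^2 := by
    rw [Real.rpow_add h2]
    congr 1
    rw [show ((2:ℝ)) = ((2:ℕ):ℝ) by norm_num, Real.rpow_natCast]
  rw [e1, e2]
  have ht' : t ≠ 0 := ne_of_gt ht
  set X := ((t/2:ℝ)) ^ ν with hX
  set F0 := f ν ((t/2)^2) with hF0
  set F1 := f (ν+1) ((t/2)^2) with hF1
  set F2 := f (ν+2) ((t/2)^2) with hF2
  clear_value X F0 F1 F2
  field_simp
  linear_combination (4 * X) * hrec

lemma hasDerivAt_besselJ_succ (ν : ℝ) (hν : 0 ≤ ν) (t : ℝ) (ht : 0 < t) :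
    HasDerivAt (besselJ (ν+1)) (besselJ ν t - ((ν+1)/t) * besselJ (ν+1) t) t := by
  have h := hasDerivAt_besselJ (ν+1) (by linarith) t ht
  have hrec := besselJ_rec ν hν t ht
  have h21 : (ν+1+1) = ν+2 := by ring
  rw [h21] at h
  have ht' : t ≠ 0 := ne_of_gt ht
  have heq : (ν+1)/t * besselJ (ν+1) t - besselJ (ν+2) t
      = besselJ ν t - ((ν+1)/t) * besselJ (ν+1) t := by
    field_simp at hrec ⊢
    linarith
  rwa [heq] at h


/-- Near 0, `J_ν`, `J_{ν+1}` are positive and `(2ν+1) J_{ν+1}(t) < t J_ν(t)`. -/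
lemma small_props (ν : ℝ) (hν : 0 ≤ ν) :
    ∃ δ > 0, ∀ t : ℝ, 0 < t → t < δ →
      0 < besselJ ν t ∧ 0 < besselJ (ν+1) t ∧
      (2*ν+1) * besselJ (ν+1) t < t * besselJ ν t := by
  have hΓ1 : 0 < Real.Gamma (ν + 1) := Real.Gamma_pos_of_pos (by linarith)
  have hΓ2 : 0 < Real.Gamma (ν + 1 + 1) := Real.Gamma_pos_of_pos (by linarith)
  -- continuity facts at 0
  have hψ : ∀ᶠ y in nhds (0:ℝ),
      0 < f ν y ∧ 0 < f (ν+1) y ∧ (2*ν+1) * f (ν+1) y < 2 * f ν y := by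
    have hc0 : ContinuousAt (f ν) 0 := (continuous_f ν hν).continuousAt
    have hc1 : ContinuousAt (f (ν+1)) 0 := (continuous_f (ν+1) (by linarith)).continuousAt
    have h1 : ∀ᶠ y in nhds (0:ℝ), 0 < f ν y := by
      apply hc0.eventually (p := fun z => 0 < z)
      apply eventually_gt_nhds
      rw [f_zero]; positivity
    have h2 : ∀ᶠ y in nhds (0:ℝ), 0 < f (ν+1) y := by
      apply hc1.eventually (p := fun z => 0 < z)
      apply eventually_gt_nhds
      rw [f_zero]; positivity
    have h3 : ∀ᶠ y in nhds (0:ℝ), 0 < 2 * f ν y - (2*ν+1) * f (ν+1) y := by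
      have hcψ : ContinuousAt (fun y => 2 * f ν y - (2*ν+1) * f (ν+1) y) 0 :=
        ((continuous_const.mul (continuous_f ν hν)).sub
          (continuous_const.mul (continuous_f (ν+1) (by linarith)))).continuousAt
      apply hcψ.eventually (p := fun z => 0 < z)
      apply eventually_gt_nhds
      simp only [f_zero]
      have hΓe : Real.Gamma (ν + 1 + 1) = (ν+1) * Real.Gamma (ν+1) :=
        Real.Gamma_add_one (by positivity)
      rw [hΓe]
      rw [sub_pos, mul_one_div, mul_one_div, div_lt_div_iff₀ (by positivity) (by positivity)]
      nlinarith [hΓ1]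
    filter_upwards [h1, h2, h3] with y hy1 hy2 hy3
    exact ⟨hy1, hy2, by linarith⟩
  rw [Metric.eventually_nhds_iff] at hψ
  obtain ⟨ε, hε0, hε⟩ := hψ
  refine ⟨min 1 ε, by positivity, ?_⟩
  intro t ht0 htδ
  have ht1 : t < 1 := lt_of_lt_of_le htδ (min_le_left _ _)
  have htε : t < ε := lt_of_lt_of_le htδ (min_le_right _ _)
  have hy : dist ((t/2)^2 : ℝ) 0 < ε := by
    rw [Real.dist_eq, sub_zero, abs_of_pos (by positivity)]
    nlinarith
  obtain ⟨hy1, hy2, hy3⟩ := hε hy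
  have h2t : (0:ℝ) < t/2 := by linarith
  have e1 : (t/2:ℝ) ^ (ν+1) = (t/2)^ν * (t/2) := Real.rpow_add_one (ne_of_gt h2t) ν
  have hX : (0:ℝ) < (t/2) ^ ν := Real.rpow_pos_of_pos h2t ν
  refine ⟨?_, ?_, ?_⟩
  · rw [besselJ_eq ν t ht0]; positivity
  · rw [besselJ_eq (ν+1) t ht0, e1]; positivity
  · rw [besselJ_eq ν t ht0, besselJ_eq (ν+1) t ht0, e1]
    calc (2*ν+1) * ((t/2)^ν * (t/2) * f (ν+1) ((t/2)^2))
        = ((t/2)^ν * (t/2)) * ((2*ν+1) * f (ν+1) ((t/2)^2)) := by ring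
      _ < ((t/2)^ν * (t/2)) * (2 * f ν ((t/2)^2)) := by
          apply mul_lt_mul_of_pos_left hy3 (by positivity)
      _ = t * ((t/2)^ν * f ν ((t/2)^2)) := by ring


end BesselAux

open BesselAux in
/-- `g(t) = J_{ν+1}(t)/J_ν(t)` is well defined and strictly increasing
on `(0, j_{ν,1})`, with `g'(t) > 0` there. -/
theorem besselJ_ratio_strictMono (ν j : ℝ) (hν : 0 ≤ ν)
    (hj : IsLeast {x : ℝ | 0 < x ∧ besselJ ν x = 0} j) :
    (∀ t ∈ Set.Ioo (0 : ℝ) j, besselJ ν t ≠ 0) ∧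
    StrictMonoOn (fun t => besselJ (ν + 1) t / besselJ ν t) (Set.Ioo 0 j) ∧
    ∀ t ∈ Set.Ioo (0 : ℝ) j,
      0 < deriv (fun t => besselJ (ν + 1) t / besselJ ν t) t := by
  obtain ⟨⟨hj0, hjz⟩, hjle⟩ := hj
  obtain ⟨δ, hδ0, hδ⟩ := small_props ν hν
  -- A : J_ν positive on (0, j)
  have Jν_pos : ∀ t ∈ Set.Ioo (0:ℝ) j, 0 < besselJ ν t := by
    intro t ⟨ht0, htj⟩
    by_contra hle
    push_neg at hle
    by_cases hcase : t < δ
    · exact absurd (hδ t ht0 hcase).1 (not_lt.mpr hle)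
    · push_neg at hcase
      set s := δ/2 with hs
      have hs0 : 0 < s := by positivity
      have hst : s < t := by
        calc s < δ := by linarith
          _ ≤ t := hcase
      have hJs : 0 < besselJ ν s := (hδ s hs0 (by linarith)).1
      have hcont : ContinuousOn (besselJ ν) (Icc s t) := by
        intro x hx
        have hx0 : 0 < x := lt_of_lt_of_le hs0 hx.1
        exact ((hasDerivAt_besselJ ν hν x hx0).differentiableAt.continuousAt).continuousWithinAt
      have h0mem : (0:ℝ) ∈ Icc (besselJ ν t) (besselJ ν s) := ⟨hle, le_of_lt hJs⟩
      obtain ⟨c, hcmem, hc0⟩ := intermediate_value_Icc' (le_of_lt hst) hcont h0mem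
      have hcj : j ≤ c := hjle ⟨lt_of_lt_of_le hs0 hcmem.1, hc0⟩
      have : c < j := lt_of_le_of_lt hcmem.2 htj
      linarith
  -- B : J_{ν+1} positive on (0, j)
  have Jν1_pos : ∀ t ∈ Set.Ioo (0:ℝ) j, 0 < besselJ (ν+1) t := by
    have hF : ∀ t ∈ Set.Ioo (0:ℝ) j,
        HasDerivAt (fun s : ℝ => s ^ (ν+1) * besselJ (ν+1) s)
          (t ^ (ν+1) * besselJ ν t) t := by
      intro t ⟨ht0, htj⟩
      have h1 : HasDerivAt (fun s : ℝ => s ^ (ν+1)) ((ν+1) * t ^ ν) t := by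
        have := Real.hasDerivAt_rpow_const (x := t) (p := ν+1) (Or.inl (ne_of_gt ht0))
        simpa using this
      have h2 := hasDerivAt_besselJ_succ ν hν t ht0
      have := h1.mul h2
      have hval : (ν+1) * t ^ ν * besselJ (ν+1) t
          + t ^ (ν+1) * (besselJ ν t - (ν+1)/t * besselJ (ν+1) t)
          = t ^ (ν+1) * besselJ ν t := by
        have e1 : t ^ (ν+1) = t ^ ν * t := Real.rpow_add_one (ne_of_gt ht0) ν
        rw [e1]
        field_simp
        ring
      rwa [hval] at this
    have hmono : StrictMonoOn (fun s : ℝ => s ^ (ν+1) * besselJ (ν+1) s) (Set.Ioo 0 j) := by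
      apply strictMonoOn_of_deriv_pos (convex_Ioo 0 j)
      · intro x hx
        exact ((hF x hx).differentiableAt.continuousAt).continuousWithinAt
      · intro x hx
        rw [interior_Ioo] at hx
        rw [(hF x hx).deriv]
        have := Jν_pos x hx
        have := Real.rpow_pos_of_pos hx.1 (ν+1)
        positivity
    intro t ⟨ht0, htj⟩
    set s := min (δ/2) (t/2) with hs
    have hs0 : 0 < s := by positivity
    have hsδ : s < δ := lt_of_le_of_lt (min_le_left _ _) (by linarith)
    have hst : s < t := lt_of_le_of_lt (min_le_right _ _) (by linarith)
    have hsmem : s ∈ Set.Ioo (0:ℝ) j := ⟨hs0, by linarith⟩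
    have hFst := hmono hsmem ⟨ht0, htj⟩ hst
    have hFs : 0 < s ^ (ν+1) * besselJ (ν+1) s := by
      have := (hδ s hs0 hsδ).2.1
      have := Real.rpow_pos_of_pos hs0 (ν+1)
      positivity
    have hFt : 0 < t ^ (ν+1) * besselJ (ν+1) t := lt_trans hFs hFst
    have hX : 0 < t ^ (ν+1) := Real.rpow_pos_of_pos ht0 (ν+1)
    by_contra hle
    push_neg at hle
    nlinarith [hX, hFt]
  -- C : derivative of g
  set g : ℝ → ℝ := fun t => besselJ (ν + 1) t / besselJ ν t with hgdef
  set D : ℝ → ℝ := fun t => 1 + g t ^ 2 - (2*ν+1) * (g t / t) with hDdef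
  have gD : ∀ t ∈ Set.Ioo (0:ℝ) j, HasDerivAt g (D t) t := by
    intro t ht
    have ht0 : 0 < t := ht.1
    have hJν := Jν_pos t ht
    have h1 := hasDerivAt_besselJ_succ ν hν t ht0
    have h2 := hasDerivAt_besselJ ν hν t ht0
    have := h1.div h2 (ne_of_gt hJν)
    have hval : ((besselJ ν t - (ν+1)/t * besselJ (ν+1) t) * besselJ ν t
        - besselJ (ν+1) t * (ν / t * besselJ ν t - besselJ (ν+1) t)) / (besselJ ν t) ^ 2
        = D t := by
      rw [hDdef, hgdef]
      simp only
      field_simp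
      ring
    rwa [hval] at this
  -- D is positive on (0, j)
  have Dpos : ∀ t ∈ Set.Ioo (0:ℝ) j, 0 < D t := by
    have Dsmall : ∀ t ∈ Set.Ioo (0:ℝ) j, t < δ → 0 < D t := by
      intro t ht htδ
      have ht0 : 0 < t := ht.1
      have hJν := Jν_pos t ht
      have h3 := (hδ t ht0 htδ).2.2
      have hgt : (2*ν+1) * (g t / t) < 1 := by
        rw [hgdef]
        simp only
        rw [div_div, mul_div_assoc']
        rw [div_lt_one (by positivity)]
        calc (2*ν+1) * besselJ (ν+1) t < t * besselJ ν t := h3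
          _ = besselJ ν t * t := by ring
      have hg2 : 0 ≤ g t ^ 2 := sq_nonneg _
      rw [hDdef]; simp only; linarith
    by_contra hcon
    push_neg at hcon
    obtain ⟨t₁, ht₁, hDt₁⟩ := hcon
    set S : Set ℝ := {t | t ∈ Set.Ioo (0:ℝ) j ∧ D t ≤ 0} with hSdef
    have hmem₁ : t₁ ∈ S := ⟨ht₁, hDt₁⟩
    have hSne : S.Nonempty := ⟨t₁, hmem₁⟩
    have hSbdd : BddBelow S := ⟨0, fun s hs => le_of_lt hs.1.1⟩
    set t₀ := sInf S with ht₀def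
    have hlowS : ∀ s ∈ S, δ ≤ s := by
      intro s hs
      by_contra hlt
      push_neg at hlt
      exact absurd hs.2 (not_le.mpr (Dsmall s hs.1 hlt))
    have ht₀δ : δ ≤ t₀ := le_csInf hSne hlowS
    have ht₀0 : 0 < t₀ := lt_of_lt_of_le hδ0 ht₀δ
    have ht₀j : t₀ < j := lt_of_le_of_lt (csInf_le hSbdd hmem₁) ht₁.2
    have ht₀mem : t₀ ∈ Set.Ioo (0:ℝ) j := ⟨ht₀0, ht₀j⟩
    -- D is positive strictly left of t₀
    have hDleft : ∀ u, 0 < u → u < t₀ → 0 < D u := by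
      intro u hu0 hut₀
      have hu_not : u ∉ S := notMem_of_lt_csInf hut₀ hSbdd
      have humem : u ∈ Set.Ioo (0:ℝ) j := ⟨hu0, lt_trans hut₀ ht₀j⟩
      by_contra hle
      push_neg at hle
      exact hu_not ⟨humem, hle⟩
    -- continuity of D at points of (0,j)
    have hDcont : ∀ t ∈ Set.Ioo (0:ℝ) j, ContinuousAt D t := by
      intro t ht
      have hg := (gD t ht).differentiableAt.continuousAt
      rw [hDdef]
      exact (continuousAt_const.add (hg.pow 2)).sub
        (continuousAt_const.mul (hg.div continuousAt_id (ne_of_gt ht.1)))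
    -- D t₀ = 0
    have hDt₀ : D t₀ = 0 := by
      rcases lt_trichotomy (D t₀) 0 with hneg | hzero | hpos
      · -- then D < 0 slightly left, contradiction with hDleft
        have := (hDcont t₀ ht₀mem).eventually (p := fun z => z < 0) (eventually_lt_nhds hneg)
        rw [Metric.eventually_nhds_iff] at this
        obtain ⟨η, hη0, hη⟩ := this
        set u := max (t₀ - η/2) (t₀/2) with hu
        have hu0 : 0 < u := lt_of_lt_of_le (by positivity) (le_max_right _ _)
        have hut₀ : u < t₀ := by
          apply max_lt (by linarith) (by linarith)
        have hdist : dist u t₀ < η := by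
          rw [Real.dist_eq, abs_of_neg (by linarith)]
          have : t₀ - η/2 ≤ u := le_max_left _ _
          linarith
        exact absurd (hDleft u hu0 hut₀) (not_lt.mpr (le_of_lt (hη hdist)))
      · exact hzero
      · -- then D > 0 near t₀, but inf of S means points of S nearby
        exfalso
        have := (hDcont t₀ ht₀mem).eventually (p := fun z => 0 < z) (eventually_gt_nhds hpos)
        rw [Metric.eventually_nhds_iff] at this
        obtain ⟨η, hη0, hη⟩ := this
        obtain ⟨s, hsS, hslt⟩ := exists_lt_of_csInf_lt hSne (by linarith : sInf S < t₀ + η)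
        have hst₀ : t₀ ≤ s := csInf_le hSbdd hsS
        have hdist : dist s t₀ < η := by
          rw [Real.dist_eq, abs_of_nonneg (by linarith)]
          linarith
        exact absurd hsS.2 (not_le.mpr (hη hdist))
    -- derivative of D at t₀ is positive
    have hg0 : 0 < g t₀ := by
      rw [hgdef]
      exact div_pos (Jν1_pos t₀ ht₀mem) (Jν_pos t₀ ht₀mem)
    have hgd := gD t₀ ht₀mem
    have hraw := ((hasDerivAt_const t₀ (1:ℝ)).add (hgd.pow 2)).sub
        ((hgd.div (hasDerivAt_id t₀) (ne_of_gt ht₀0)).const_mul (2*ν+1))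
    simp only [id_eq] at hraw
    set c : ℝ := (2*ν+1) * (g t₀ / t₀ ^ 2) with hc
    have hcpos : 0 < c := by rw [hc]; positivity
    have hD' : HasDerivAt D c t₀ := by
      have hval : 0 + ((2:ℕ):ℝ) * g t₀ ^ (2-1) * D t₀
          - (2*ν+1) * ((D t₀ * t₀ - g t₀ * 1) / t₀ ^ 2) = c := by
        rw [hDt₀, hc]; push_cast; ring
      rw [← hval]
      exact hraw
    -- but slopes from the left are nonpositive
    have htend : Tendsto (slope D t₀) (nhdsWithin t₀ {t₀}ᶜ) (nhds c) :=
      hasDerivAt_iff_tendsto_slope.mp hD'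
    have hmono_f : nhdsWithin t₀ (Iio t₀) ≤ nhdsWithin t₀ {t₀}ᶜ :=
      nhdsWithin_mono t₀ (fun x hx => ne_of_lt hx)
    have htend' : Tendsto (slope D t₀) (nhdsWithin t₀ (Iio t₀)) (nhds c) :=
      htend.mono_left hmono_f
    have hev : ∀ᶠ u in nhdsWithin t₀ (Iio t₀), slope D t₀ u ≤ 0 := by
      have h1 : ∀ᶠ u in nhdsWithin t₀ (Iio t₀), 0 < u :=
        eventually_nhdsWithin_of_eventually_nhds (eventually_gt_nhds ht₀0)
      have h2 : ∀ᶠ u in nhdsWithin t₀ (Iio t₀), u < t₀ :=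
        eventually_mem_nhdsWithin.mono (fun u hu => hu)
      filter_upwards [h1, h2] with u hu0 hut₀
      rw [slope_def_field, hDt₀, sub_zero]
      apply div_nonpos_of_nonneg_of_nonpos
      · exact le_of_lt (hDleft u hu0 hut₀)
      · linarith
    have : c ≤ 0 := le_of_tendsto htend' hev
    linarith
  -- conclusion
  refine ⟨fun t ht => ne_of_gt (Jν_pos t ht), ?_, ?_⟩
  · apply strictMonoOn_of_deriv_pos (convex_Ioo 0 j)
    · intro x hx
      exact ((gD x hx).differentiableAt.continuousAt).continuousWithinAt
    · intro x hx
      rw [interior_Ioo] at hx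
      rw [(gD x hx).deriv]
      exact Dpos x hx
  · intro t ht
    rw [(gD t ht).deriv]
    exact Dpos t ht
end

section
/- Let n ≥ 2 be an integer, let μ = j_{n/2−1,1} be the smallest positive zero of J_{n/2−1}, and define ψ(r) = r^{1−n/2} J_{n/2−1}(μ r) for r ∈ (0,1]. Then the function r ↦ |ψ'(r)| has a unique maximum point r* in the open interval (0,1): there exists a unique r* ∈ (0,1) such that |ψ'(r)| < |ψ'(r*)| for all r ∈ (0,1] with r ≠ r*. -/
open MeasureTheory Set Filter Topology

noncomputable def bc (ν : ℝ) (k : ℕ) : ℝ :=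
  (-1 : ℝ) ^ k / (Nat.factorial k * Real.Gamma (ν + k + 1) * 4 ^ k)

noncomputable def bF (ν : ℝ) (t : ℝ) : ℝ := ∑' k : ℕ, bc ν k * t ^ k

lemma Gamma_shift_pos {ν : ℝ} (hν : 0 ≤ ν) (k : ℕ) : 0 < Real.Gamma (ν + k + 1) :=
  Real.Gamma_pos_of_pos (by positivity)

lemma Gamma_succ_shift {ν : ℝ} (hν : 0 ≤ ν) (k : ℕ) :
    Real.Gamma (ν + (k+1 : ℕ) + 1) = (ν + k + 1) * Real.Gamma (ν + k + 1) := by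
  have h := Real.Gamma_add_one (show (ν + k + 1 : ℝ) ≠ 0 by positivity)
  have : (ν + ((k:ℝ)+1) + 1) = (ν + k + 1) + 1 := by ring
  push_cast
  rw [this, h]

lemma fact_Gamma_le {ν : ℝ} (hν : 0 ≤ ν) (k : ℕ) :
    (Nat.factorial k : ℝ) * Real.Gamma (ν + 1) ≤ Real.Gamma (ν + k + 1) := by
  induction k with
  | zero => simp
  | succ k ih =>
      rw [Gamma_succ_shift hν k]
      have h2 : ((k+1 : ℕ) : ℝ) * ((Nat.factorial k : ℝ) * Real.Gamma (ν + 1)) ≤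
          (ν + k + 1) * Real.Gamma (ν + k + 1) := by
        apply mul_le_mul (by push_cast; linarith) ih (by positivity) (by positivity)
      calc ((Nat.factorial (k+1) : ℝ)) * Real.Gamma (ν + 1)
          = ((k+1 : ℕ) : ℝ) * ((Nat.factorial k : ℝ) * Real.Gamma (ν + 1)) := by
            rw [Nat.factorial_succ]; push_cast; ring
        _ ≤ _ := h2

lemma Gamma_one_le_shift {ν : ℝ} (hν : 0 ≤ ν) (k : ℕ) :
    Real.Gamma (ν + 1) ≤ Real.Gamma (ν + k + 1) := by
  have h := fact_Gamma_le hν k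
  have h1 : (1:ℝ) ≤ Nat.factorial k := by exact_mod_cast Nat.one_le_iff_ne_zero.mpr (Nat.factorial_ne_zero k)
  nlinarith [Real.Gamma_pos_of_pos (show (0:ℝ) < ν + 1 by linarith)]

lemma bc_abs_le {ν : ℝ} (hν : 0 ≤ ν) (k : ℕ) :
    |bc ν k| ≤ (1 / Real.Gamma (ν + 1)) * ((1:ℝ)/4) ^ k / Nat.factorial k := by
  have hΓ := Gamma_shift_pos hν k
  have hΓ1 : 0 < Real.Gamma (ν + 1) := Real.Gamma_pos_of_pos (by positivity)
  have hfk : (0:ℝ) < Nat.factorial k := by positivity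
  have habs : |bc ν k| = 1 / (Nat.factorial k * Real.Gamma (ν + k + 1) * 4 ^ k) := by
    rw [bc, abs_div, abs_pow, abs_neg, abs_one, one_pow]
    congr 1
    rw [abs_of_pos (by positivity)]
  have hrhs : (1 / Real.Gamma (ν + 1)) * ((1:ℝ)/4) ^ k / Nat.factorial k
      = 1 / (Nat.factorial k * Real.Gamma (ν + 1) * 4 ^ k) := by
    rw [div_pow, one_pow]
    field_simp
  rw [habs, hrhs]
  apply one_div_le_one_div_of_le (by positivity)
  gcongr
  exact Gamma_one_le_shift hν k

lemma summable_aux (c y : ℝ) : Summable (fun k : ℕ => c * (y ^ k / Nat.factorial k)) :=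
  (Real.summable_pow_div_factorial y).mul_left c

lemma summable_bc_mul {ν : ℝ} (hν : 0 ≤ ν) (t : ℝ) :
    Summable (fun k : ℕ => bc ν k * t ^ k) := by
  apply Summable.of_abs
  refine Summable.of_nonneg_of_le (fun k => abs_nonneg _) (fun k => ?_)
    (summable_aux (1 / Real.Gamma (ν + 1)) (|t|/4))
  · rw [abs_mul, abs_pow]
    calc |bc ν k| * |t| ^ k ≤ ((1 / Real.Gamma (ν + 1)) * ((1:ℝ)/4) ^ k / Nat.factorial k) * |t| ^ k := by
          apply mul_le_mul_of_nonneg_right (bc_abs_le hν k) (by positivity)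
      _ = (1 / Real.Gamma (ν + 1)) * ((|t|/4) ^ k / Nat.factorial k) := by
          rw [div_pow, div_pow, one_pow]; ring

lemma bc_succ (ν : ℝ) (hν : 0 ≤ ν) (k : ℕ) :
    ((k:ℝ)+1) * bc ν (k+1) = -(bc (ν+1) k) / 4 := by
  have harg : ν + ((k+1:ℕ):ℝ) + 1 = ((ν+1) + (k:ℝ) + 1) := by push_cast; ring
  have hΓpos : 0 < Real.Gamma ((ν+1) + k + 1) := Gamma_shift_pos (by linarith) k
  rw [bc, bc, harg, Nat.factorial_succ]
  have h1 : ((-1:ℝ))^(k+1) = -(-1:ℝ)^k := by rw [pow_succ]; ring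
  have hfk : ((Nat.factorial k : ℝ)) ≠ 0 := by positivity
  have h4 : ((4:ℝ))^k ≠ 0 := by positivity
  rw [h1]
  push_cast
  field_simp
  ring

lemma u_succ_eq {ν : ℝ} (hν : 0 ≤ ν) (R : ℝ) (hR : 0 ≤ R) (k : ℕ) :
    |bc ν (k+1)| * (((k+1:ℕ):ℝ) * R ^ ((k+1)-1)) = (|bc (ν+1) k| / 4) * R ^ k := by
  have h := bc_succ ν hν k
  have : |((k:ℝ)+1) * bc ν (k+1)| = |bc (ν+1) k| / 4 := by
    rw [h, abs_div, abs_neg]; norm_num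
  rw [abs_mul] at this
  have hk1 : |((k:ℝ)+1)| = ((k:ℝ)+1) := abs_of_pos (by positivity)
  rw [hk1] at this
  have hs : (k+1) - 1 = k := rfl
  rw [hs]
  push_cast
  rw [← this]; ring

lemma summable_u {ν : ℝ} (hν : 0 ≤ ν) (R : ℝ) (hR : 0 ≤ R) :
    Summable (fun k : ℕ => |bc ν k| * ((k:ℝ) * R ^ (k-1))) := by
  rw [← summable_nat_add_iff 1]
  apply Summable.of_nonneg_of_le (fun k => by positivity) (fun k => ?_)
    (summable_aux ((1 / Real.Gamma (ν + 1 + 1)) / 4) (R/4))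
  have := u_succ_eq hν R hR k
  push_cast at this ⊢
  rw [this]
  calc |bc (ν+1) k| / 4 * R ^ k
      ≤ ((1 / Real.Gamma (ν + 1 + 1)) * ((1:ℝ)/4) ^ k / Nat.factorial k) / 4 * R ^ k := by
        apply mul_le_mul_of_nonneg_right (by
          apply div_le_div_of_nonneg_right (bc_abs_le (by linarith : (0:ℝ) ≤ ν + 1) k) (by norm_num))
          (by positivity)
    _ = 1 / Real.Gamma (ν + 1 + 1) / 4 * ((R/4) ^ k / Nat.factorial k) := by
        rw [div_pow, div_pow, one_pow]; ring

lemma bF_hasDerivAt {ν : ℝ} (hν : 0 ≤ ν) (t : ℝ) :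
    HasDerivAt (bF ν) (-(bF (ν+1) t)/4) t := by
  set R : ℝ := |t| + 1 with hRdef
  have hR : 0 < R := by positivity
  have ht : t ∈ Metric.ball (0:ℝ) R := by
    simp only [Metric.mem_ball, dist_zero_right, Real.norm_eq_abs, hRdef]; linarith
  have hbound : ∀ (k : ℕ) (x : ℝ), x ∈ Metric.ball (0:ℝ) R →
      ‖bc ν k * ((k:ℝ) * x ^ (k-1))‖ ≤ |bc ν k| * ((k:ℝ) * R ^ (k-1)) := by
    intro k x hx
    rw [Metric.mem_ball, dist_zero_right, Real.norm_eq_abs] at hx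
    rw [Real.norm_eq_abs, abs_mul, abs_mul, abs_pow, Nat.abs_cast]
    have hpow : |x| ^ (k-1) ≤ R ^ (k-1) := pow_le_pow_left₀ (abs_nonneg x) hx.le _
    have hk0 : (0:ℝ) ≤ (k:ℝ) := by positivity
    exact mul_le_mul_of_nonneg_left (mul_le_mul_of_nonneg_left hpow hk0) (abs_nonneg _)
  have hderivsum : Summable (fun k : ℕ => bc ν k * ((k:ℝ) * t ^ (k-1))) := by
    apply Summable.of_abs
    apply Summable.of_nonneg_of_le (fun k => abs_nonneg _) (fun k => ?_) (summable_u hν R hR.le)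
    have h := hbound k t ht
    rwa [Real.norm_eq_abs] at h
  have main : HasDerivAt (bF ν) (∑' k : ℕ, bc ν k * ((k:ℝ) * t ^ (k-1))) t := by
    apply hasDerivAt_of_tendstoUniformlyOn (f := fun (s : Finset ℕ) x => ∑ k ∈ s, bc ν k * x ^ k)
      (f' := fun (s : Finset ℕ) x => ∑ k ∈ s, bc ν k * ((k:ℝ) * x ^ (k-1)))
      Metric.isOpen_ball
      (tendstoUniformlyOn_tsum (summable_u hν R hR.le) hbound)
      ?_ ?_ ht
    · filter_upwards with s x _
      exact HasDerivAt.fun_sum fun k _ => (hasDerivAt_pow k x).const_mul (bc ν k)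
    · intro x _
      exact (summable_bc_mul hν x).hasSum
  have heq : (∑' k : ℕ, bc ν k * ((k:ℝ) * t ^ (k-1))) = -(bF (ν+1) t)/4 := by
    rw [Summable.tsum_eq_zero_add hderivsum]
    simp only [Nat.cast_zero, zero_mul, mul_zero, zero_add]
    have : ∀ k : ℕ, bc ν (k+1) * (((k+1:ℕ):ℝ) * t ^ ((k+1)-1)) = (-(1:ℝ)/4) * (bc (ν+1) k * t ^ k) := by
      intro k
      have h := bc_succ ν hν k
      have hs : (k+1) - 1 = k := rfl
      rw [hs]
      push_cast
      calc bc ν (k+1) * (((k:ℝ)+1) * t ^ k)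
          = (((k:ℝ)+1) * bc ν (k+1)) * t ^ k := by ring
        _ = (-(bc (ν+1) k)/4) * t ^ k := by rw [h]
        _ = (-(1:ℝ)/4) * (bc (ν+1) k * t ^ k) := by ring
    rw [tsum_congr this, tsum_mul_left]
    rw [bF]
    ring
  rwa [heq] at main

lemma bc_zero (ν : ℝ) : bc ν 0 = 1 / Real.Gamma (ν + 1) := by
  simp [bc]

lemma bF_zero (ν : ℝ) : bF ν 0 = 1 / Real.Gamma (ν + 1) := by
  rw [bF, tsum_eq_single 0 (fun k hk => by
    rw [zero_pow hk, mul_zero])]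
  rw [pow_zero, mul_one, bc_zero]

lemma bF_cont {ν : ℝ} (hν : 0 ≤ ν) : Continuous (bF ν) :=
  continuous_iff_continuousAt.2 fun t => (bF_hasDerivAt hν t).differentiableAt.continuousAt

lemma bc_rec {ν : ℝ} (hν : 0 ≤ ν) (k : ℕ) :
    (ν+1) * bc (ν+1) (k+1) - bc ν (k+1) = bc (ν+2) k / 4 := by
  have hz : (0:ℝ) < ν + k + 2 := by positivity
  have hΓz : 0 < Real.Gamma (ν + k + 2) := Real.Gamma_pos_of_pos hz
  have e1 : ν + ((k+1:ℕ):ℝ) + 1 = ν + k + 2 := by push_cast; ring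
  have e2 : (ν+1) + ((k+1:ℕ):ℝ) + 1 = (ν + k + 2) + 1 := by push_cast; ring
  have e3 : (ν+2) + (k:ℝ) + 1 = (ν + k + 2) + 1 := by push_cast; ring
  rw [bc, bc, bc, e1, e2, e3, Real.Gamma_add_one (ne_of_gt hz), Nat.factorial_succ]
  have h1 : ((-1:ℝ))^(k+1) = -(-1:ℝ)^k := by rw [pow_succ]; ring
  rw [h1]
  have hfk : ((Nat.factorial k : ℝ)) ≠ 0 := by positivity
  have h4 : ((4:ℝ))^k ≠ 0 := by positivity
  have hk1 : ((k:ℝ)+1) ≠ 0 := by positivity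
  push_cast
  field_simp
  ring

lemma bF_identity {ν : ℝ} (hν : 0 ≤ ν) (t : ℝ) :
    (t/4) * bF (ν+2) t = (ν+1) * bF (ν+1) t - bF ν t := by
  have s0 := summable_bc_mul hν t
  have s1 := summable_bc_mul (ν := ν+1) (by linarith) t
  have s2 := summable_bc_mul (ν := ν+2) (by linarith) t
  have hsub : Summable (fun k : ℕ => ((ν+1) * bc (ν+1) k - bc ν k) * t ^ k) := by
    have h := ((s1.mul_left (ν+1)).sub s0)
    exact h.congr fun k => by ring
  have hRHS : (ν+1) * bF (ν+1) t - bF ν t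
      = ∑' k : ℕ, ((ν+1) * bc (ν+1) k - bc ν k) * t ^ k := by
    rw [bF, bF, ← tsum_mul_left, ← Summable.tsum_sub (s1.mul_left _) s0]
    exact tsum_congr fun k => by ring
  have he0 : ((ν+1) * bc (ν+1) 0 - bc ν 0) = 0 := by
    rw [bc_zero, bc_zero]
    have hG : Real.Gamma (ν + 1 + 1) = (ν+1) * Real.Gamma (ν + 1) := by
      rw [Real.Gamma_add_one (by positivity)]
    rw [hG]
    have hΓ : Real.Gamma (ν + 1) ≠ 0 := ne_of_gt (Real.Gamma_pos_of_pos (by positivity))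
    field_simp
    ring
  rw [hRHS, Summable.tsum_eq_zero_add hsub]
  rw [pow_zero, mul_one, he0, zero_add]
  have hterm : ∀ k : ℕ, ((ν+1) * bc (ν+1) (k+1) - bc ν (k+1)) * t ^ (k+1)
      = (t/4) * (bc (ν+2) k * t ^ k) := by
    intro k
    rw [bc_rec hν k, pow_succ]
    ring
  rw [tsum_congr hterm, tsum_mul_left, bF]

lemma besselJ_eq_bF {ν : ℝ} (hν : 0 ≤ ν) {x : ℝ} (hx : 0 < x) :
    besselJ ν x = (x/2) ^ ν * bF ν (x^2) := by
  rw [besselJ, bF, ← tsum_mul_left]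
  apply tsum_congr
  intro k
  have hx2 : (0:ℝ) < x/2 := by linarith
  have h1 : (x/2) ^ (2*(k:ℝ)+ν) = ((x^2)^k/4^k) * (x/2) ^ ν := by
    rw [Real.rpow_add hx2]
    congr 1
    have h2 : (2*(k:ℝ)) = ((2*k : ℕ) : ℝ) := by push_cast; ring
    rw [h2, Real.rpow_natCast, pow_mul]
    have h3 : (x/2)^2 = x^2/4 := by ring
    rw [h3, div_pow]
  rw [h1, bc]
  have hΓ : Real.Gamma (ν + k + 1) ≠ 0 := ne_of_gt (Gamma_shift_pos hν k)
  have hfk : ((Nat.factorial k : ℝ)) ≠ 0 := by positivity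
  have h4 : ((4:ℝ))^k ≠ 0 := by positivity
  field_simp

lemma ev_lt_right {f : ℝ → ℝ} {f' z : ℝ} (hd : HasDerivAt f f' z) (hf' : f' < 0) :
    ∀ᶠ t in 𝓝[>] z, f t < f z := by
  have h := hasDerivAt_iff_tendsto_slope.1 hd
  have h2 : ∀ᶠ t in 𝓝[≠] z, slope f z t < 0 := h.eventually_lt_const hf'
  have hle : 𝓝[>] z ≤ 𝓝[≠] z := nhdsWithin_mono z (fun t ht => ne_of_gt ht)
  filter_upwards [hle h2, self_mem_nhdsWithin] with t hs ht
  rw [slope_def_field] at hs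
  have hzt : 0 < t - z := by simp only [mem_Ioi] at ht; linarith
  rcases div_neg_iff.1 hs with ⟨ha, hb⟩ | ⟨ha, hb⟩ <;> linarith

lemma ev_gt_left {f : ℝ → ℝ} {f' z : ℝ} (hd : HasDerivAt f f' z) (hf' : f' < 0) :
    ∀ᶠ t in 𝓝[<] z, f z < f t := by
  have h := hasDerivAt_iff_tendsto_slope.1 hd
  have h2 : ∀ᶠ t in 𝓝[≠] z, slope f z t < 0 := h.eventually_lt_const hf'
  have hle : 𝓝[<] z ≤ 𝓝[≠] z := nhdsWithin_mono z (fun t ht => ne_of_lt ht)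
  filter_upwards [hle h2, self_mem_nhdsWithin] with t hs ht
  rw [slope_def_field] at hs
  have hzt : t - z < 0 := by simp only [mem_Iio] at ht; linarith
  rcases div_neg_iff.1 hs with ⟨ha, hb⟩ | ⟨ha, hb⟩ <;> linarith

lemma deriv_nonpos_of_nonneg_left {f : ℝ → ℝ} {f' z : ℝ} (hd : HasDerivAt f f' z)
    (hz : f z = 0) (h : ∀ᶠ t in 𝓝[<] z, 0 ≤ f t) : f' ≤ 0 := by
  by_contra hc
  push_neg at hc
  have := ev_gt_left hd.neg (by simpa using hc)
  simp only [Pi.neg_apply, hz, neg_zero] at this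
  have h2 := this.and h
  rcases h2.exists with ⟨t, h1, h2⟩
  linarith

lemma deriv_nonneg_of_nonpos_left {f : ℝ → ℝ} {f' z : ℝ} (hd : HasDerivAt f f' z)
    (hz : f z = 0) (h : ∀ᶠ t in 𝓝[<] z, f t ≤ 0) : 0 ≤ f' := by
  have := deriv_nonpos_of_nonneg_left hd.neg (by simp [hz]) (by filter_upwards [h] with t ht; simpa using ht)
  linarith

noncomputable def bW (ν t : ℝ) : ℝ := bF ν t / 2 - (2*ν+1) * bF (ν+1) t / 4
noncomputable def bW' (ν t : ℝ) : ℝ := -(bF (ν+1) t)/8 + (2*ν+1) * bF (ν+2) t / 16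
noncomputable def bP (ν T r : ℝ) : ℝ := r * bF (ν+1) (T*r^2)

lemma bW_hasDerivAt {ν : ℝ} (hν : 0 ≤ ν) (t : ℝ) : HasDerivAt (bW ν) (bW' ν t) t := by
  have h11 : ν + 1 + 1 = ν + 2 := by ring
  have h1 := (bF_hasDerivAt hν t).div_const 2
  have h2 := ((bF_hasDerivAt (by linarith : (0:ℝ) ≤ ν+1) t).const_mul (2*ν+1)).div_const 4
  rw [h11] at h2
  have h3 := h1.sub h2
  have h3' : HasDerivAt (bW ν) _ t := h3
  convert h3' using 1
  rw [bW']; ring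

lemma bW'_hasDerivAt {ν : ℝ} (hν : 0 ≤ ν) (t : ℝ) :
    HasDerivAt (bW' ν) (bF (ν+2) t/32 - (2*ν+1) * bF (ν+3) t/64) t := by
  have h11 : ν + 1 + 1 = ν + 2 := by ring
  have h12 : ν + 2 + 1 = ν + 3 := by ring
  have h1 := ((bF_hasDerivAt (by linarith : (0:ℝ) ≤ ν+1) t).neg).div_const 8
  rw [h11] at h1
  have h2 := ((bF_hasDerivAt (by linarith : (0:ℝ) ≤ ν+2) t).const_mul (2*ν+1)).div_const 16
  rw [h12] at h2
  have h3 := h1.add h2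
  have h3' : HasDerivAt (bW' ν) _ t := h3
  convert h3' using 1
  ring

lemma bW_cont {ν : ℝ} (hν : 0 ≤ ν) : Continuous (bW ν) :=
  (((bF_cont hν).div_const 2).sub ((continuous_const.mul (bF_cont (by linarith : (0:ℝ) ≤ ν+1))).div_const 4))

lemma bW_zero_pos {ν : ℝ} (hν : 0 ≤ ν) : 0 < bW ν 0 := by
  have hG : Real.Gamma (ν + 1 + 1) = (ν+1) * Real.Gamma (ν+1) := by
    rw [Real.Gamma_add_one (by positivity : (ν+1:ℝ) ≠ 0)]
  have hΓν1 : 0 < Real.Gamma (ν + 1) := Real.Gamma_pos_of_pos (by linarith)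
  have h : bW ν 0 = 1 / (4 * ((ν+1) * Real.Gamma (ν+1))) := by
    rw [bW, bF_zero, bF_zero, hG]
    have hν1 : (ν+1:ℝ) ≠ 0 := by positivity
    field_simp
    ring
  rw [h]; positivity

lemma tC_eq {ν : ℝ} (hν : 0 ≤ ν) {t : ℝ} (hWt : bW ν t = 0) :
    t * bF (ν+2) t = 2 * bF (ν+1) t := by
  have hid := bF_identity hν t
  rw [bW] at hWt
  linear_combination 4 * hid - 8 * hWt

lemma bW_deriv_key {ν : ℝ} (hν : 0 ≤ ν) {t : ℝ} (hWt : bW ν t = 0) :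
    16 * t * bW' ν t = 2 * bF (ν+1) t * ((2*ν+1) - t) := by
  have htC := tC_eq hν hWt
  rw [bW']
  linear_combination (2*ν+1) * htC

lemma bW_second_key {ν : ℝ} (hν : 0 ≤ ν) {t : ℝ} (ht : t = 2*ν+1) (hWt : bW ν t = 0) :
    64 * t * (bF (ν+2) t/32 - (2*ν+1) * bF (ν+3) t/64) = -4 * t * bF (ν+2) t := by
  have htC := tC_eq hν hWt
  have hid2 := bF_identity (by linarith : (0:ℝ) ≤ ν+1) t
  have h11 : ν + 1 + 1 = ν + 2 := by ring
  have h12 : ν + 1 + 2 = ν + 3 := by ring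
  rw [h12, h11] at hid2
  subst ht
  linear_combination (-4*(2*ν+1)) * hid2 + (-2*(2*ν+1)) * htC

lemma bP_hasDerivAt {ν : ℝ} (hν : 0 ≤ ν) (T r : ℝ) :
    HasDerivAt (bP ν T) (4 * bW ν (T*r^2)) r := by
  have hinner : HasDerivAt (fun r : ℝ => T * r^2) (T * (2*r)) r := by
    have := (hasDerivAt_pow 2 r).const_mul T
    exact this.congr_deriv (by norm_num)
  have houter := (bF_hasDerivAt (by linarith : (0:ℝ) ≤ ν+1) (T*r^2)).comp r hinner
  have h11 : ν + 1 + 1 = ν + 2 := by ring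
  rw [h11] at houter
  have hmul := (hasDerivAt_id r).mul houter
  have hid := bF_identity hν (T*r^2)
  simp only [Function.comp, id] at hmul
  have hmul' : HasDerivAt (bP ν T) _ r := hmul
  convert hmul' using 1
  rw [bW]
  linear_combination 2 * hid

lemma bP_cont {ν : ℝ} (hν : 0 ≤ ν) (T : ℝ) : Continuous (bP ν T) := by
  apply continuous_id.mul ((bF_cont (by linarith : (0:ℝ) ≤ ν+1)).comp (by continuity))

set_option maxHeartbeats 2000000

/-- `|ψ'|`, where `ψ(r) = r^{1−n/2} J_{n/2−1}(μ r)`, has a unique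
maximum point in `(0, 1)`. -/
theorem unique_max_of_abs_deriv_psi (n : ℕ) (hn : 2 ≤ n) (μ : ℝ)
    (hμ : IsLeast {x : ℝ | 0 < x ∧ besselJ ((n : ℝ) / 2 - 1) x = 0} μ)
    (ψ : ℝ → ℝ)
    (hψ : ψ = fun r : ℝ => r ^ (1 - (n : ℝ) / 2) * besselJ ((n : ℝ) / 2 - 1) (μ * r)) :
    ∃! rstar : ℝ, rstar ∈ Set.Ioo (0 : ℝ) 1 ∧
      ∀ r ∈ Set.Ioc (0 : ℝ) 1, r ≠ rstar → |deriv ψ r| < |deriv ψ rstar| := by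
  obtain ⟨⟨hμpos, hμzero⟩, hμlb⟩ := hμ
  obtain ⟨ν, hν_def⟩ : ∃ v : ℝ, v = (n:ℝ)/2 - 1 := ⟨_, rfl⟩
  rw [← hν_def] at hμzero hμlb hψ
  have hn2 : (2:ℝ) ≤ (n:ℝ) := by exact_mod_cast hn
  have hν : 0 ≤ ν := by rw [hν_def]; linarith
  have hν1 : 0 ≤ ν + 1 := by linarith
  have hΓν1 : 0 < Real.Gamma (ν + 1) := Real.Gamma_pos_of_pos (by linarith)
  have hΓν2 : 0 < Real.Gamma (ν + 2) := Real.Gamma_pos_of_pos (by linarith)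
  obtain ⟨T, hT_def⟩ : ∃ t : ℝ, t = μ^2 := ⟨_, rfl⟩
  have hT : 0 < T := by rw [hT_def]; positivity
  have h11 : ν + 1 + 1 = ν + 2 := by ring
  -- A vanishes at T
  have hA_T : bF ν T = 0 := by
    have h := besselJ_eq_bF hν hμpos
    rw [hμzero] at h
    have hp : (0:ℝ) < (μ/2) ^ ν := Real.rpow_pos_of_pos (by linarith) ν
    rcases mul_eq_zero.1 h.symm with h' | h'
    · exact absurd h' (ne_of_gt hp)
    · rw [hT_def]; exact h'
  -- A positive before T
  have hA_pos : ∀ t, 0 ≤ t → t < T → 0 < bF ν t := by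
    intro t ht htT
    by_contra hc
    push_neg at hc
    have hA0 : 0 < bF ν 0 := by rw [bF_zero]; positivity
    have hIVT : (0:ℝ) ∈ Set.Icc (bF ν t) (bF ν 0) := ⟨hc, hA0.le⟩
    obtain ⟨z, hzmem, hz0⟩ := intermediate_value_Icc' ht
      ((bF_cont hν).continuousOn (s := Set.Icc 0 t)) hIVT
    have hzpos : 0 < z := by
      rcases eq_or_lt_of_le hzmem.1 with h | h
      · exfalso; rw [← h] at hz0; linarith
      · exact h
    have hzT : z < T := lt_of_le_of_lt hzmem.2 htT
    have hxpos : 0 < Real.sqrt z := Real.sqrt_pos.2 hzpos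
    have hx2 : (Real.sqrt z)^2 = z := Real.sq_sqrt hzpos.le
    have hxzero : besselJ ν (Real.sqrt z) = 0 := by
      rw [besselJ_eq_bF hν hxpos, hx2, hz0, mul_zero]
    have hle := hμlb (show Real.sqrt z ∈ {x : ℝ | 0 < x ∧ besselJ ν x = 0} from ⟨hxpos, hxzero⟩)
    have hxltμ : Real.sqrt z < μ := by
      have h2 : (Real.sqrt z)^2 < μ^2 := by rw [hx2, ← hT_def]; exact hzT
      nlinarith
    linarith
  -- B positive on (0, T)
  have hB0 : bF (ν+1) 0 = 1 / Real.Gamma (ν+2) := by rw [bF_zero, h11]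
  have hB0pos : 0 < bF (ν+1) 0 := by rw [hB0]; positivity
  have hB_pos : ∀ t, 0 < t → t < T → 0 < bF (ν+1) t := by
    intro t₁ ht₁ ht₁T
    by_contra hc
    push_neg at hc
    obtain ⟨E, hE_def⟩ : ∃ e : Set ℝ, e = Set.Icc 0 t₁ ∩ {t | bF (ν+1) t ≤ 0} := ⟨_, rfl⟩
    have hEclosed : IsClosed E := by
      rw [hE_def]; exact isClosed_Icc.inter (isClosed_le (bF_cont hν1) continuous_const)
    have hEne : E.Nonempty := ⟨t₁, by rw [hE_def]; exact ⟨⟨ht₁.le, le_refl _⟩, hc⟩⟩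
    have hEbdd : BddBelow E := ⟨0, fun u hu => by rw [hE_def] at hu; exact hu.1.1⟩
    obtain ⟨z, hz_def⟩ : ∃ x : ℝ, x = sInf E := ⟨_, rfl⟩
    have hzE : z ∈ E := hz_def ▸ hEclosed.csInf_mem hEne hEbdd
    rw [hE_def] at hzE
    have hzpos : 0 < z := by
      rcases eq_or_lt_of_le hzE.1.1 with h | h
      · exfalso; have h2 := hzE.2; rw [← h] at h2; simp only [Set.mem_setOf_eq] at h2; linarith
      · exact h
    have hbefore : ∀ u, 0 ≤ u → u < z → 0 < bF (ν+1) u := by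
      intro u hu huz
      by_contra hcu
      push_neg at hcu
      have hmem : u ∈ E := by rw [hE_def]; exact ⟨⟨hu, le_trans huz.le hzE.1.2⟩, hcu⟩
      have := csInf_le hEbdd hmem
      rw [← hz_def] at this
      linarith
    have hev : ∀ᶠ u in 𝓝[<] z, 0 ≤ bF (ν+1) u := by
      filter_upwards [self_mem_nhdsWithin,
        eventually_nhdsWithin_of_eventually_nhds (eventually_gt_nhds hzpos)] with u hu1 hu2
      exact (hbefore u hu2.le hu1).le
    have hzzero : bF (ν+1) z = 0 := le_antisymm hzE.2
      (ge_of_tendsto (((bF_cont hν1).continuousAt (x := z)).continuousWithinAt.tendsto) hev)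
    have hzT : z < T := lt_of_le_of_lt hzE.1.2 ht₁T
    have hid := bF_identity hν z
    have hAz : 0 < bF ν z := hA_pos z hzpos.le hzT
    have hCz : bF (ν+2) z < 0 := by nlinarith
    have hd := bF_hasDerivAt hν1 z
    rw [h11] at hd
    have hle := deriv_nonpos_of_nonneg_left hd hzzero hev
    linarith
  have hB_T : 0 ≤ bF (ν+1) T := by
    have hev : ∀ᶠ u in 𝓝[<] T, 0 ≤ bF (ν+1) u := by
      filter_upwards [self_mem_nhdsWithin,
        eventually_nhdsWithin_of_eventually_nhds (eventually_gt_nhds hT)] with u hu1 hu2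
      exact (hB_pos u hu2 hu1).le
    exact ge_of_tendsto (((bF_cont hν1).continuousAt (x := T)).continuousWithinAt.tendsto) hev
  -- t₀ : first zero of W
  obtain ⟨S, hS_def⟩ : ∃ s : Set ℝ, s = Set.Icc 0 T ∩ {t | bW ν t ≤ 0} := ⟨_, rfl⟩
  have hSclosed : IsClosed S := by
    rw [hS_def]; exact isClosed_Icc.inter (isClosed_le (bW_cont hν) continuous_const)
  have hWT : bW ν T ≤ 0 := by
    rw [bW, hA_T]
    nlinarith [hB_T]
  have hSne : S.Nonempty := ⟨T, by rw [hS_def]; exact ⟨⟨hT.le, le_refl T⟩, hWT⟩⟩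
  have hSbdd : BddBelow S := ⟨0, fun u hu => by rw [hS_def] at hu; exact hu.1.1⟩
  obtain ⟨t₀, ht₀_def⟩ : ∃ x : ℝ, x = sInf S := ⟨_, rfl⟩
  have ht₀S : t₀ ∈ S := ht₀_def ▸ hSclosed.csInf_mem hSne hSbdd
  rw [hS_def] at ht₀S
  have ht₀mem := ht₀S.1
  have hW_before : ∀ u, 0 ≤ u → u < t₀ → 0 < bW ν u := by
    intro u hu hut₀
    by_contra hc
    push_neg at hc
    have hmem : u ∈ S := by rw [hS_def]; exact ⟨⟨hu, le_trans hut₀.le ht₀mem.2⟩, hc⟩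
    have := csInf_le hSbdd hmem
    rw [← ht₀_def] at this
    linarith
  have ht₀pos : 0 < t₀ := by
    rcases eq_or_lt_of_le ht₀mem.1 with h | h
    · exfalso; have h2 := ht₀S.2; rw [← h] at h2; simp only [Set.mem_setOf_eq] at h2
      have := bW_zero_pos hν; linarith
    · exact h
  have hevW : ∀ᶠ u in 𝓝[<] t₀, 0 ≤ bW ν u := by
    filter_upwards [self_mem_nhdsWithin,
      eventually_nhdsWithin_of_eventually_nhds (eventually_gt_nhds ht₀pos)] with u hu1 hu2
    exact (hW_before u hu2.le hu1).le
  have hWt₀ : bW ν t₀ = 0 := le_antisymm ht₀S.2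
    (ge_of_tendsto (((bW_cont hν).continuousAt (x := t₀)).continuousWithinAt.tendsto) hevW)
  have hd_t₀ := bW_hasDerivAt hν t₀
  have hW'le : bW' ν t₀ ≤ 0 := deriv_nonpos_of_nonneg_left hd_t₀ hWt₀ hevW
  -- t₀ < T
  have ht₀T : t₀ < T := by
    rcases eq_or_lt_of_le ht₀mem.2 with h | h
    · exfalso
      have hBT0 : bF (ν+1) T = 0 := by
        have h2 := hWt₀
        rw [h, bW, hA_T] at h2
        have h3 : (2*ν+1) * bF (ν+1) T = 0 := by linarith
        rcases mul_eq_zero.1 h3 with h4 | h4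
        · exfalso; linarith
        · exact h4
      have hmono : StrictMonoOn (bP ν T) (Set.Icc 0 1) := by
        apply strictMonoOn_of_deriv_pos (convex_Icc 0 1) ((bP_cont hν T).continuousOn)
        intro r hr
        rw [interior_Icc] at hr
        rw [(bP_hasDerivAt hν T r).deriv]
        have h1 : 0 < T*r^2 := mul_pos hT (pow_pos hr.1 2)
        have h2 : T*r^2 < t₀ := by
          rw [h]
          have hrsq : r^2 < 1 := by nlinarith [hr.1, hr.2]
          nlinarith [hT]
        have := hW_before (T*r^2) h1.le h2
        linarith
      have hP1 : bP ν T 1 = 0 := by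
        rw [bP]
        norm_num [hBT0]
      have hPhalf : 0 < bP ν T (1/2) := by
        rw [bP]
        have h1 : 0 < T*(1/2:ℝ)^2 := by nlinarith [hT]
        have h2 : T*(1/2:ℝ)^2 < T := by nlinarith [hT]
        have := hB_pos _ h1 h2
        nlinarith
      have hlast := hmono (show (1/2:ℝ) ∈ Set.Icc (0:ℝ) 1 by norm_num)
        (show (1:ℝ) ∈ Set.Icc (0:ℝ) 1 by norm_num) (by norm_num)
      rw [hP1] at hlast
      linarith
    · exact h
  have hBt₀ : 0 < bF (ν+1) t₀ := hB_pos t₀ ht₀pos ht₀T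
  have hkey := bW_deriv_key hν hWt₀
  have ht₀ge : 2*ν+1 ≤ t₀ := by nlinarith [hkey, hW'le, hBt₀, ht₀pos]
  have ht₀gt : 2*ν+1 < t₀ := by
    rcases eq_or_lt_of_le ht₀ge with h | h
    · exfalso
      have h16 : 16 * t₀ * bW' ν t₀ = 0 := by
        rw [hkey, ← h]; ring
      have hW'0 : bW' ν t₀ = 0 := by
        rcases mul_eq_zero.1 h16 with h' | h'
        · exfalso; linarith
        · exact h'
      have h2nd := bW'_hasDerivAt hν t₀
      have hval := bW_second_key hν h.symm hWt₀
      have hCpos : 0 < bF (ν+2) t₀ := by nlinarith [tC_eq hν hWt₀, hBt₀, ht₀pos]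
      have hv_neg : bF (ν+2) t₀/32 - (2*ν+1) * bF (ν+3) t₀/64 < 0 := by
        nlinarith [hval, hCpos, ht₀pos]
      have hev := ev_gt_left h2nd hv_neg
      rw [hW'0] at hev
      rcases mem_nhdsLT_iff_exists_Ioo_subset.1 hev with ⟨a, ha, hsub⟩
      obtain ⟨a', ha'_def⟩ : ∃ x : ℝ, x = max a (t₀/2) := ⟨_, rfl⟩
      have haa' : a ≤ a' := ha'_def ▸ le_max_left _ _
      have hta : t₀/2 ≤ a' := ha'_def ▸ le_max_right _ _
      have ha'lt : a' < t₀ := by rw [ha'_def]; exact max_lt ha (by linarith)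
      have hmono2 : StrictMonoOn (bW ν) (Set.Icc a' t₀) := by
        apply strictMonoOn_of_deriv_pos (convex_Icc _ _) ((bW_cont hν).continuousOn)
        intro u hu
        rw [interior_Icc] at hu
        rw [(bW_hasDerivAt hν u).deriv]
        exact hsub ⟨lt_of_le_of_lt haa' hu.1, hu.2⟩
      have hmid : (a' + t₀)/2 ∈ Set.Icc a' t₀ := ⟨by linarith, by linarith⟩
      have hlt := hmono2 hmid ⟨by linarith, le_refl _⟩ (by linarith)
      rw [hWt₀] at hlt
      have hmidpos : 0 ≤ (a' + t₀)/2 := by linarith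
      have := hW_before _ hmidpos (by linarith)
      linarith
    · exact h
  -- W negative on (t₀, T)
  have hW_after : ∀ u, t₀ < u → u < T → bW ν u < 0 := by
    have hd0_neg : bW' ν t₀ < 0 := by nlinarith [hkey, hBt₀, ht₀gt, ht₀pos]
    have hevr := ev_lt_right hd_t₀ hd0_neg
    rw [hWt₀] at hevr
    rcases mem_nhdsGT_iff_exists_Ioo_subset.1 hevr with ⟨b, hb, hsub⟩
    intro u hu huT
    by_contra hc
    push_neg at hc
    obtain ⟨c, hc_def⟩ : ∃ x : ℝ, x = (t₀ + min b u)/2 := ⟨_, rfl⟩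
    have hminb : t₀ < min b u := lt_min hb hu
    have hct₀ : t₀ < c := by rw [hc_def]; linarith
    have hcb : c < b := by
      rw [hc_def]; have := min_le_left b u; linarith
    have hcu : c < u := by
      rw [hc_def]; have := min_le_right b u; linarith
    obtain ⟨E2, hE2_def⟩ : ∃ e : Set ℝ, e = Set.Icc c u ∩ {t | 0 ≤ bW ν t} := ⟨_, rfl⟩
    have hE2closed : IsClosed E2 := by
      rw [hE2_def]; exact isClosed_Icc.inter (isClosed_le continuous_const (bW_cont hν))
    have hE2ne : E2.Nonempty := ⟨u, by rw [hE2_def]; exact ⟨⟨hcu.le, le_refl _⟩, hc⟩⟩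
    have hE2bdd : BddBelow E2 := ⟨c, fun v hv => by rw [hE2_def] at hv; exact hv.1.1⟩
    obtain ⟨t₁, ht₁_def⟩ : ∃ x : ℝ, x = sInf E2 := ⟨_, rfl⟩
    have ht₁E : t₁ ∈ E2 := ht₁_def ▸ hE2closed.csInf_mem hE2ne hE2bdd
    rw [hE2_def] at ht₁E
    have ht₁c : c ≤ t₁ := ht₁E.1.1
    have ht₁u : t₁ ≤ u := ht₁E.1.2
    have ht₁gt : t₀ < t₁ := lt_of_lt_of_le hct₀ ht₁c
    have hneg_before : ∀ v, t₀ < v → v < t₁ → bW ν v < 0 := by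
      intro v hv1 hv2
      rcases lt_or_ge v c with hvc | hvc
      · exact hsub ⟨hv1, lt_trans hvc hcb⟩
      · by_contra hcc
        push_neg at hcc
        have hmem : v ∈ E2 := by
          rw [hE2_def]; exact ⟨⟨hvc, le_trans hv2.le ht₁u⟩, hcc⟩
        have := csInf_le hE2bdd hmem
        rw [← ht₁_def] at this
        linarith
    have hevl : ∀ᶠ v in 𝓝[<] t₁, bW ν v ≤ 0 := by
      filter_upwards [self_mem_nhdsWithin,
        eventually_nhdsWithin_of_eventually_nhds (eventually_gt_nhds ht₁gt)] with v hv1 hv2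
      exact (hneg_before v hv2 hv1).le
    have hWt₁0 : bW ν t₁ = 0 := le_antisymm
      (le_of_tendsto (((bW_cont hν).continuousAt (x := t₁)).continuousWithinAt.tendsto) hevl)
      ht₁E.2
    have ht₁T : t₁ < T := lt_of_le_of_lt ht₁u huT
    have hBt₁ : 0 < bF (ν+1) t₁ := hB_pos t₁ (lt_trans ht₀pos ht₁gt) ht₁T
    have hkey₁ := bW_deriv_key hν hWt₁0
    have hd₁_neg : bW' ν t₁ < 0 := by nlinarith [hBt₁, ht₁gt, ht₀gt, ht₀pos]
    have hge := deriv_nonneg_of_nonpos_left (bW_hasDerivAt hν t₁) hWt₁0 hevl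
    linarith
  -- rstar
  obtain ⟨rstar, hrs_def⟩ : ∃ x : ℝ, x = Real.sqrt (t₀/T) := ⟨_, rfl⟩
  have hrs_pos : 0 < rstar := by
    rw [hrs_def]; exact Real.sqrt_pos.2 (div_pos ht₀pos hT)
  have hrs_sq : T * rstar^2 = t₀ := by
    rw [hrs_def, Real.sq_sqrt (div_pos ht₀pos hT).le]
    field_simp
  have hrs_lt1 : rstar < 1 := by
    by_contra hcon
    push_neg at hcon
    have h1 : (1:ℝ) ≤ rstar^2 := by nlinarith
    nlinarith [hrs_sq, ht₀T, hT]
  -- P monotonicity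
  have hPmono : StrictMonoOn (bP ν T) (Set.Icc 0 rstar) := by
    apply strictMonoOn_of_deriv_pos (convex_Icc _ _) ((bP_cont hν T).continuousOn)
    intro r hr
    rw [interior_Icc] at hr
    rw [(bP_hasDerivAt hν T r).deriv]
    have h1 : 0 < T*r^2 := mul_pos hT (pow_pos hr.1 2)
    have h2 : T*r^2 < t₀ := by
      rw [← hrs_sq]
      have h3 : r^2 < rstar^2 := by nlinarith [hr.1, hr.2]
      nlinarith [hT]
    have := hW_before _ h1.le h2
    linarith
  have hPanti : StrictAntiOn (bP ν T) (Set.Icc rstar 1) := by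
    apply strictAntiOn_of_deriv_neg (convex_Icc _ _) ((bP_cont hν T).continuousOn)
    intro r hr
    rw [interior_Icc] at hr
    rw [(bP_hasDerivAt hν T r).deriv]
    have hrpos : 0 < r := lt_trans hrs_pos hr.1
    have h2 : t₀ < T*r^2 := by
      rw [← hrs_sq]
      have h3 : rstar^2 < r^2 := by nlinarith [hrs_pos, hr.1]
      nlinarith [hT]
    have hrsq : r^2 < 1 := by nlinarith [hrpos, hr.2]
    have h3 : T*r^2 < T := by nlinarith [hT, hrsq]
    have := hW_after _ h2 h3
    linarith
  have hPkey : ∀ r, 0 < r → r ≤ 1 → r ≠ rstar → bP ν T r < bP ν T rstar := by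
    intro r hr hr1 hne
    rcases lt_or_gt_of_ne hne with h | h
    · exact hPmono ⟨hr.le, h.le⟩ ⟨hrs_pos.le, le_refl _⟩ h
    · exact hPanti ⟨le_refl _, hrs_lt1.le⟩ ⟨h.le, hr1⟩ h
  -- deriv ψ
  have hψr : ∀ r : ℝ, 0 < r → ψ r = (μ/2)^ν * bF ν (T*r^2) := by
    intro r hr
    rw [hψ]
    simp only
    have hμr : 0 < μ * r := mul_pos hμpos hr
    rw [besselJ_eq_bF hν hμr]
    have h1 : 1 - (n:ℝ)/2 = -ν := by rw [hν_def]; ring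
    rw [h1]
    have h2 : (μ*r/2) = (μ/2) * r := by ring
    rw [h2, Real.mul_rpow (by positivity) hr.le]
    have h3 : (μ*r)^2 = T*r^2 := by rw [hT_def]; ring
    rw [h3]
    rw [show r ^ (-ν) * ((μ/2)^ν * r^ν * bF ν (T*r^2))
        = (μ/2)^ν * ((r^(-ν) * r^ν) * bF ν (T*r^2)) by ring]
    rw [← Real.rpow_add hr, neg_add_cancel, Real.rpow_zero, one_mul]
  have hKpos : 0 < (μ/2)^ν * T/2 := by
    have := Real.rpow_pos_of_pos (show (0:ℝ) < μ/2 by linarith) ν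
    positivity
  have hderiv : ∀ r : ℝ, 0 < r → deriv ψ r = -((μ/2)^ν * T/2) * bP ν T r := by
    intro r hr
    have hEv : ψ =ᶠ[nhds r] fun u => (μ/2)^ν * bF ν (T*u^2) := by
      filter_upwards [IsOpen.mem_nhds isOpen_Ioi (show r ∈ Set.Ioi (0:ℝ) from hr)] with u hu
      exact hψr u hu
    rw [hEv.deriv_eq]
    have hinner : HasDerivAt (fun u : ℝ => T * u^2) (T*(2*r)) r := by
      have := (hasDerivAt_pow 2 r).const_mul T
      exact this.congr_deriv (by norm_num)
    have houter := (bF_hasDerivAt hν (T*r^2)).comp r hinner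
    have hconst := houter.const_mul ((μ/2)^ν : ℝ)
    simp only [Function.comp] at hconst
    rw [hconst.deriv, bP]
    ring
  have habs : ∀ r : ℝ, 0 < r → r ≤ 1 → |deriv ψ r| = ((μ/2)^ν * T/2) * bP ν T r := by
    intro r hr hr1
    have hBnn : 0 ≤ bF (ν+1) (T*r^2) := by
      have hrsq : r^2 ≤ 1 := by nlinarith [hr, hr1]
      rcases eq_or_lt_of_le (show T*r^2 ≤ T by nlinarith [hT, hrsq]) with h | h
      · rw [h]; exact hB_T
      · exact (hB_pos _ (mul_pos hT (pow_pos hr 2)) h).le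
    have hPnn : 0 ≤ bP ν T r := by rw [bP]; exact mul_nonneg hr.le hBnn
    rw [hderiv r hr, abs_mul, abs_neg, abs_of_pos hKpos, abs_of_nonneg hPnn]
  have hmain : ∀ r ∈ Set.Ioc (0:ℝ) 1, r ≠ rstar → |deriv ψ r| < |deriv ψ rstar| := by
    intro r hr hne
    rw [habs r hr.1 hr.2, habs rstar hrs_pos hrs_lt1.le]
    exact mul_lt_mul_of_pos_left (hPkey r hr.1 hr.2 hne) hKpos
  refine ⟨rstar, ⟨⟨hrs_pos, hrs_lt1⟩, hmain⟩, ?_⟩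
  rintro y ⟨hymem, hyprop⟩
  by_contra hne
  have h1 := hyprop rstar ⟨hrs_pos, hrs_lt1.le⟩ (fun hcon => hne hcon.symm)
  have h2 := hmain y ⟨hymem.1, hymem.2.le⟩ hne
  linarith
end
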